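/- Let a ∈ (0,1), a ≠ 1/2, and let μ_a be the image on [0,1] under φ((x_n)) = Σ x_n/2ⁿ of the Bernoulli(a) product measure on {0,1}^ℕ (mass a on digit 0). Then there is c > 1 such that for Lebesgue-almost every x ∈ (0,1), the distribution function F(x) = μ_a([0,x]) satisfies lim_{h→0} (F(x+h) - F(x))/|h|^c = 0. In particular F has derivative 0 Lebesgue-a.e. -/

import Mathlib

open MeasureTheory Filter
open scoped ENNReal

/-- The `i`-th binary digit of `x ∈ [0,1)` (expansion not eventually 1), `i ≥ 1`. -/
noncomputable def binDigit (x : ℝ) (i : ℕ) : ℕ := ⌊x * 2 ^ i⌋.toNat % 2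

/-- The number of indices `1 ≤ i ≤ n` with `binDigit x i = 1`. -/
noncomputable def onesCount (x : ℝ) (n : ℕ) : ℕ :=
  ((Finset.Icc 1 n).filter fun i => binDigit x i = 1).card



/-- number of ones among binary digits `0..n-1` of `k`. -/
def natOnes (n k : ℕ) : ℕ := ((Finset.range n).filter fun j => k / 2^j % 2 = 1).card

lemma natOnes_le (n k : ℕ) : natOnes n k ≤ n := by
  classical
  calc natOnes n k ≤ (Finset.range n).card := Finset.card_filter_le _ _
  _ = n := Finset.card_range n

lemma natOnes_succ_of_lt {n k : ℕ} (h : k < 2^n) : natOnes (n+1) k = natOnes n k := by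
  classical
  unfold natOnes
  rw [Finset.range_add_one, Finset.filter_insert, if_neg]
  simp [Nat.div_eq_of_lt h]

lemma natOnes_succ_add {n k : ℕ} (h : k < 2^n) : natOnes (n+1) (2^n + k) = natOnes n k + 1 := by
  classical
  unfold natOnes
  rw [Finset.range_add_one, Finset.filter_insert, if_pos]
  · rw [Finset.card_insert_of_notMem (by simp)]
    have hfc : ∀ j ∈ Finset.range n, ((2^n + k) / 2 ^ j % 2 = 1) ↔ (k / 2 ^ j % 2 = 1) := by
      intro j hj
      simp only [Finset.mem_range] at hj
      have hjn : j + (n - j) = n := by omega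
      have h2 : 2^n + k = k + 2^j * 2^(n-j) := by
        rw [← pow_add, hjn, Nat.add_comm]
      rw [h2, Nat.add_mul_div_left _ _ (by positivity)]
      have h3 : 2^(n-j) = 2 * 2^(n-j-1) := by
        rw [← pow_succ']
        congr 1
        omega
      rw [h3, Nat.add_mul_mod_self_left]
    rw [Finset.filter_congr hfc]
  · have h2 : (2^n + k) / 2^n = 1 := by
      rw [Nat.add_div_left k (by positivity), Nat.div_eq_of_lt h]
    simp only [h2]

lemma sum_pow_natOnes (r : ℝ) (n : ℕ) :
    ∑ k ∈ Finset.range (2^n), r ^ natOnes n k = (1+r)^n := by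
  induction n with
  | zero => simp [natOnes]
  | succ n ih =>
    have h2 : (2:ℕ)^(n+1) = 2^n + 2^n := by ring
    rw [h2, Finset.range_eq_Ico,
      ← Finset.sum_Ico_consecutive _ (Nat.zero_le (2^n)) (Nat.le_add_left _ _),
      Finset.sum_Ico_eq_sum_range (fun i => r ^ natOnes (n+1) i) (2^n) (2^n + 2^n)]
    rw [Nat.add_sub_cancel_left]
    rw [← Finset.range_eq_Ico]
    have e1 : ∑ k ∈ Finset.range (2^n), r ^ natOnes (n+1) k
        = ∑ k ∈ Finset.range (2^n), r ^ natOnes n k := by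
      apply Finset.sum_congr rfl
      intro k hk
      rw [natOnes_succ_of_lt (Finset.mem_range.mp hk)]
    have e2 : ∑ k ∈ Finset.range (2^n), r ^ natOnes (n+1) (2^n + k)
        = ∑ k ∈ Finset.range (2^n), r * r ^ natOnes n k := by
      apply Finset.sum_congr rfl
      intro k hk
      rw [natOnes_succ_add (Finset.mem_range.mp hk), pow_succ]
      ring
    rw [e1, e2, ← Finset.mul_sum, ih, pow_succ]
    ring
lemma entropy_gt_half {θ : ℝ} (h0 : 0 < θ) (h1 : θ < 1) (hne : θ ≠ 1/2) :
    1/2 < θ ^ θ * (1-θ) ^ (1-θ) := by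
  have h1θ : 0 < 1 - θ := by linarith
  have key := Real.strictConvexOn_mul_log.2 (x := θ) (y := 1-θ) (by simp [h0.le])
    (by simp [h1θ.le]) (by intro h; apply hne; linarith) (by norm_num : (0:ℝ) < 1/2)
    (by norm_num : (0:ℝ) < 1/2) (by norm_num)
  have hmid : (1/2 : ℝ) • θ + (1/2 : ℝ) • (1-θ) = 1/2 := by simp only [smul_eq_mul]; ring
  rw [hmid] at key
  have hlog : -Real.log 2 < θ * Real.log θ + (1-θ) * Real.log (1-θ) := by
    have hl : Real.log (1/2) = -Real.log 2 := by
      rw [one_div, Real.log_inv]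
    have := key
    simp only [smul_eq_mul] at this
    nlinarith [this, hl]
  rw [Real.rpow_def_of_pos h0, Real.rpow_def_of_pos h1θ, ← Real.exp_add]
  have h2 : (1/2 : ℝ) = Real.exp (-Real.log 2) := by
    rw [Real.exp_neg, Real.exp_log (by norm_num : (0:ℝ) < 2)]
    norm_num
  rw [h2]
  apply Real.exp_lt_exp.mpr
  nlinarith [hlog]

lemma chernoff_const_lt_two {θ : ℝ} (h0 : 0 < θ) (h1 : θ < 1) (hne : θ ≠ 1/2) :
    (1 + θ/(1-θ)) * (θ/(1-θ)) ^ (-θ) < 2 := by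
  have h1θ : 0 < 1 - θ := by linarith
  have hr : 0 < θ/(1-θ) := by positivity
  set A := θ ^ θ with hA
  set B := (1-θ) ^ (1-θ) with hB
  set C := (1-θ) ^ θ with hC
  have hApos : 0 < A := Real.rpow_pos_of_pos h0 _
  have hBpos : 0 < B := Real.rpow_pos_of_pos h1θ _
  have hCpos : 0 < C := Real.rpow_pos_of_pos h1θ _
  have f1 : (θ/(1-θ)) ^ (-θ) = C / A := by
    rw [Real.rpow_neg hr.le, Real.div_rpow h0.le h1θ.le, ← hA, ← hC, inv_div]
  have f2 : C * B = 1 - θ := by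
    rw [hC, hB, ← Real.rpow_add h1θ]
    norm_num
  have e1 : (1 + θ/(1-θ)) = 1/(1-θ) := by field_simp; ring
  have hE : 1/2 < A * B := entropy_gt_half h0 h1 hne
  have hwE : ((1 + θ/(1-θ)) * (θ/(1-θ)) ^ (-θ)) * (A * B) = 1 := by
    rw [e1, f1]
    field_simp
    nlinarith [f2]
  have hwpos : 0 < (1 + θ/(1-θ)) * (θ/(1-θ)) ^ (-θ) := by positivity
  nlinarith [hwE, hE, hwpos]

lemma card_tail_upper (n : ℕ) (m r : ℝ) (hr : 1 ≤ r) :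
    ((((Finset.range (2^n)).filter fun k => m < (natOnes n k : ℝ)).card : ℝ))
      ≤ (1+r)^n / r ^ m := by
  classical
  have hrpos : (0:ℝ) < r := lt_of_lt_of_le one_pos hr
  have hrm : (0:ℝ) < r ^ m := Real.rpow_pos_of_pos hrpos m
  rw [le_div_iff₀ hrm]
  calc ((((Finset.range (2^n)).filter fun k => m < (natOnes n k : ℝ)).card : ℝ)) * r ^ m
      = ∑ _k ∈ (Finset.range (2^n)).filter fun k => m < (natOnes n k : ℝ), r ^ m := by
        rw [Finset.sum_const, nsmul_eq_mul]
    _ ≤ ∑ k ∈ (Finset.range (2^n)).filter fun k => m < (natOnes n k : ℝ), r ^ natOnes n k := by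
        apply Finset.sum_le_sum
        intro k hk
        have hm : m ≤ (natOnes n k : ℝ) := le_of_lt (Finset.mem_filter.mp hk).2
        calc r ^ m ≤ r ^ ((natOnes n k : ℕ) : ℝ) := Real.rpow_le_rpow_of_exponent_le hr hm
          _ = r ^ natOnes n k := Real.rpow_natCast r _
    _ ≤ ∑ k ∈ Finset.range (2^n), r ^ natOnes n k := by
        apply Finset.sum_le_sum_of_subset_of_nonneg (Finset.filter_subset _ _)
        intro k _ _
        positivity
    _ = (1+r)^n := sum_pow_natOnes r n

lemma card_tail_lower (n : ℕ) (m r : ℝ) (hr0 : 0 < r) (hr : r ≤ 1) :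
    ((((Finset.range (2^n)).filter fun k => (natOnes n k : ℝ) < m).card : ℝ))
      ≤ (1+r)^n / r ^ m := by
  classical
  have hrm : (0:ℝ) < r ^ m := Real.rpow_pos_of_pos hr0 m
  rw [le_div_iff₀ hrm]
  calc ((((Finset.range (2^n)).filter fun k => (natOnes n k : ℝ) < m).card : ℝ)) * r ^ m
      = ∑ _k ∈ (Finset.range (2^n)).filter fun k => (natOnes n k : ℝ) < m, r ^ m := by
        rw [Finset.sum_const, nsmul_eq_mul]
    _ ≤ ∑ k ∈ (Finset.range (2^n)).filter fun k => (natOnes n k : ℝ) < m, r ^ natOnes n k := by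
        apply Finset.sum_le_sum
        intro k hk
        have hm : (natOnes n k : ℝ) ≤ m := le_of_lt (Finset.mem_filter.mp hk).2
        calc r ^ m ≤ r ^ ((natOnes n k : ℕ) : ℝ) := Real.rpow_le_rpow_of_exponent_ge hr0 hr hm
          _ = r ^ natOnes n k := Real.rpow_natCast r _
    _ ≤ ∑ k ∈ Finset.range (2^n), r ^ natOnes n k := by
        apply Finset.sum_le_sum_of_subset_of_nonneg (Finset.filter_subset _ _)
        intro k _ _
        positivity
    _ = (1+r)^n := sum_pow_natOnes r n
lemma floor_dyadic {m k : ℕ} {y : ℝ} (h1 : (k:ℝ)/2^m ≤ y) (h2 : y < ((k:ℝ)+1)/2^m) :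
    ⌊y⌋ = ((k / 2^m : ℕ) : ℤ) := by
  have h2m : (0:ℝ) < 2^m := by positivity
  have h2mn : (0:ℕ) < 2^m := by positivity
  set d := k / 2^m with hd
  rw [Int.floor_eq_iff]
  constructor
  · calc ((d:ℤ) : ℝ) = (d : ℝ) := by push_cast; ring
      _ ≤ (k:ℝ)/2^m := by
        rw [le_div_iff₀ h2m]
        have : d * 2^m ≤ k := Nat.div_mul_le_self k (2^m)
        calc (d:ℝ) * 2^m = ((d * 2^m : ℕ) : ℝ) := by push_cast; ring
          _ ≤ (k:ℝ) := by exact_mod_cast this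
      _ ≤ y := h1
  · have hk : k + 1 ≤ (d+1) * 2^m := by
      have h := Nat.div_add_mod k (2^m)
      have hmod : k % 2^m < 2^m := Nat.mod_lt k h2mn
      calc k + 1 = 2^m * d + k % 2^m + 1 := by rw [h]
        _ ≤ 2^m * d + 2^m := by omega
        _ = (d+1) * 2^m := by ring
    calc y < ((k:ℝ)+1)/2^m := h2
      _ ≤ ((d:ℤ):ℝ) + 1 := by
        rw [div_le_iff₀ h2m]
        calc (k:ℝ) + 1 = (((k+1 : ℕ)) : ℝ) := by push_cast; ring
          _ ≤ (((d+1) * 2^m : ℕ) : ℝ) := by exact_mod_cast hk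
          _ = (((d:ℤ):ℝ) + 1) * 2^m := by push_cast; ring

lemma binDigit_dyadic {n k i : ℕ} (hin : i ≤ n) {x : ℝ}
    (hx1 : (k:ℝ)/2^n ≤ x) (hx2 : x < ((k:ℝ)+1)/2^n) :
    binDigit x i = k / 2^(n-i) % 2 := by
  have hsplit : (2:ℝ)^n = 2^(n-i) * 2^i := by
    rw [← pow_add]
    congr 1
    omega
  have h2i : (0:ℝ) < 2^i := by positivity
  have h2ni : (0:ℝ) < 2^(n-i) := by positivity
  have hk1 : (k:ℝ) ≤ x * 2^n := by
    rw [div_le_iff₀ (by positivity : (0:ℝ) < 2^n)] at hx1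
    exact hx1
  have hk2 : x * 2^n < (k:ℝ) + 1 := by
    rw [lt_div_iff₀ (by positivity : (0:ℝ) < 2^n)] at hx2
    linarith [hx2]
  have hprod : x * 2^i * 2^(n-i) = x * 2^n := by rw [hsplit]; ring
  have hy1 : (k:ℝ)/2^(n-i) ≤ x * 2^i := by
    rw [div_le_iff₀ h2ni, hprod]
    exact hk1
  have hy2 : x * 2^i < ((k:ℝ)+1)/2^(n-i) := by
    rw [lt_div_iff₀ h2ni, hprod]
    exact hk2
  unfold binDigit
  rw [floor_dyadic hy1 hy2, Int.toNat_natCast]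

lemma onesCount_dyadic {n k : ℕ} {x : ℝ}
    (hx1 : (k:ℝ)/2^n ≤ x) (hx2 : x < ((k:ℝ)+1)/2^n) :
    onesCount x n = natOnes n k := by
  classical
  unfold onesCount natOnes
  apply Finset.card_bij' (fun i _ => n - i) (fun j _ => n - j)
  · intro i hi
    simp only [Finset.mem_filter, Finset.mem_Icc] at hi
    simp only [Finset.mem_filter, Finset.mem_range]
    constructor
    · omega
    · rw [← binDigit_dyadic (by omega : i ≤ n) hx1 hx2]
      exact hi.2
  · intro j hj
    simp only [Finset.mem_filter, Finset.mem_range] at hj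
    simp only [Finset.mem_filter, Finset.mem_Icc]
    refine ⟨⟨by omega, by omega⟩, ?_⟩
    rw [binDigit_dyadic (by omega : n - j ≤ n) hx1 hx2]
    have : n - (n - j) = j := by omega
    rw [this]
    exact hj.2
  · intro i hi
    simp only [Finset.mem_filter, Finset.mem_Icc] at hi
    omega
  · intro j hj
    simp only [Finset.mem_filter, Finset.mem_range] at hj
    omega
lemma pow_chernoff_eq {r θ : ℝ} (hr : 0 < r) (n : ℕ) :
    (1+r)^n / r^(θ*(n:ℝ)) = ((1+r) * r^(-θ))^n := by
  rw [mul_pow, div_eq_mul_inv]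
  congr 1
  rw [← Real.rpow_natCast (r^(-θ)) n, ← Real.rpow_mul hr.le, ← Real.rpow_neg hr.le]
  congr 1
  ring

lemma exists_delta {b : ℝ} (hb1 : 1/2 < b) (hb2 : b < 1) :
    ∃ δ : ℝ, 0 < δ ∧ δ < 1/2 ∧ b * ((1-b)/b) ^ ((1/2:ℝ) - δ) < 1/2 := by
  have hbpos : (0:ℝ) < b := by linarith
  have h1b : (0:ℝ) < 1 - b := by linarith
  have hρ : (0:ℝ) < (1-b)/b := by positivity
  have hval : b * ((1-b)/b) ^ ((1/2:ℝ)) < 1/2 := by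
    set s := b * ((1-b)/b) ^ ((1/2:ℝ)) with hs
    have hspos : 0 < s := by positivity
    have h1 : ((((1-b)/b) ^ ((1/2):ℝ))^(2:ℕ) : ℝ) = (1-b)/b := by
      rw [← Real.rpow_natCast (((1-b)/b) ^ ((1/2):ℝ)) 2, ← Real.rpow_mul hρ.le]
      norm_num
    have hsq : s^2 = b * (1-b) := by
      calc s^2 = b^2 * ((((1-b)/b) ^ ((1/2):ℝ))^(2:ℕ)) := by rw [hs]; ring
        _ = b^2 * ((1-b)/b) := by rw [h1]
        _ = b * (1-b) := by field_simp
    have hblt : b * (1-b) < 1/4 := by nlinarith [sq_nonneg (2*b - 1)]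
    nlinarith [hspos, hsq, hblt]
  have heq : ∀ δ : ℝ, b * ((1-b)/b) ^ ((1/2:ℝ) - δ)
      = b * Real.exp (Real.log ((1-b)/b) * ((1/2:ℝ) - δ)) := by
    intro δ
    rw [Real.rpow_def_of_pos hρ]
  have hcont : Continuous fun δ : ℝ => b * Real.exp (Real.log ((1-b)/b) * ((1/2:ℝ) - δ)) := by
    continuity
  have htend : Tendsto (fun δ : ℝ => b * ((1-b)/b) ^ ((1/2:ℝ) - δ))
      (nhdsWithin 0 (Set.Ioi 0)) (nhds (b * ((1-b)/b) ^ ((1/2:ℝ)))) := by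
    have h2 := (hcont.tendsto 0).mono_left
      (nhdsWithin_le_nhds (s := Set.Ioi (0:ℝ)) (a := (0:ℝ)))
    rw [show (fun δ : ℝ => b * ((1-b)/b) ^ ((1/2:ℝ) - δ))
      = (fun δ : ℝ => b * Real.exp (Real.log ((1-b)/b) * ((1/2:ℝ) - δ))) from funext heq]
    have h3 : b * ((1-b)/b) ^ ((1/2:ℝ))
        = b * Real.exp (Real.log ((1-b)/b) * ((1/2:ℝ) - (0:ℝ))) := by
      rw [← heq 0, sub_zero]
    rw [h3]
    exact h2
  have hev : ∀ᶠ δ in nhdsWithin (0:ℝ) (Set.Ioi 0),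
      b * ((1-b)/b) ^ ((1/2:ℝ) - δ) < 1/2 := htend.eventually_lt_const hval
  have hev2 : ∀ᶠ δ in nhdsWithin (0:ℝ) (Set.Ioi 0), δ < 1/2 :=
    eventually_nhdsWithin_of_eventually_nhds (eventually_lt_nhds (by norm_num : (0:ℝ) < 1/2))
  have hev3 : ∀ᶠ δ in nhdsWithin (0:ℝ) (Set.Ioi 0), δ ∈ Set.Ioi (0:ℝ) :=
    eventually_mem_nhdsWithin
  obtain ⟨δ, h1, h2, h3⟩ := (hev.and (hev2.and hev3)).exists
  exact ⟨δ, h3, h2, h1⟩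
lemma mass_bound {b δ : ℝ} (hb1 : 1/2 < b) (hb2 : b < 1) (hδ0 : 0 < δ)
    {n S : ℕ} (hSn : S ≤ n) (hS1 : ((1:ℝ)/2 - δ) * n ≤ S) :
    b ^ (n - S) * (1-b) ^ S ≤ (b * ((1-b)/b) ^ ((1/2:ℝ) - δ))^n := by
  have hbpos : 0 < b := by linarith
  have h1b : 0 < 1 - b := by linarith
  have hρ : 0 < (1-b)/b := by positivity
  have hρ1 : (1-b)/b ≤ 1 := by rw [div_le_one hbpos]; linarith
  have key : b ^ (n - S) * (1-b) ^ S = b^n * ((1-b)/b)^(S:ℕ) := by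
    rw [div_pow, pow_sub₀ b (ne_of_gt hbpos) hSn]
    field_simp
  rw [key, mul_pow]
  apply mul_le_mul_of_nonneg_left _ (pow_nonneg hbpos.le n)
  calc ((1-b)/b)^(S:ℕ) = ((1-b)/b)^((S:ℕ):ℝ) := (Real.rpow_natCast _ _).symm
    _ ≤ ((1-b)/b)^(((1/2:ℝ) - δ) * n) := Real.rpow_le_rpow_of_exponent_ge hρ hρ1 hS1
    _ = (((1-b)/b)^((1/2:ℝ) - δ))^n := by
        rw [Real.rpow_mul hρ.le, Real.rpow_natCast]

lemma mass_bound_final {a δ : ℝ} (ha1 : 0 < a) (ha2 : a < 1) (hane : a ≠ 1/2)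
    (hδ0 : 0 < δ)
    {n S : ℕ} (hSn : S ≤ n) (hS1 : ((1:ℝ)/2 - δ) * n ≤ S) (hS2 : (S:ℝ) ≤ ((1:ℝ)/2 + δ) * n) :
    a ^ (n - S) * (1-a) ^ S
      ≤ (max a (1-a) * ((1 - max a (1-a))/max a (1-a)) ^ ((1/2:ℝ) - δ))^n := by
  rcases lt_or_gt_of_ne hane with hlt | hgt
  · -- a < 1/2, b = 1 - a
    have hmax : max a (1-a) = 1 - a := max_eq_right (by linarith)
    rw [hmax]
    have h1 : (1 : ℝ) - (1 - a) = a := by ring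
    rw [h1]
    have hswap : a ^ (n - S) * (1-a) ^ S = (1-a) ^ (n - (n - S)) * a ^ (n - S) := by
      have : n - (n - S) = S := by omega
      rw [this]
      ring
    rw [hswap]
    have h2 : (1 : ℝ) - a ≠ 0 := by linarith  -- unused maybe
    have := mass_bound (b := 1 - a) (δ := δ) (by linarith) (by linarith) hδ0
      (show n - S ≤ n by omega)
      (by
        have hc : ((n:ℝ) - S) = ((n - S : ℕ) : ℝ) := by
          push_cast [Nat.cast_sub hSn]
          ring
        calc ((1:ℝ)/2 - δ) * n ≤ (n:ℝ) - S := by linarith [hS2]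
          _ = ((n - S : ℕ) : ℝ) := hc)
    rw [h1] at this
    exact this
  · -- a > 1/2, b = a
    have hmax : max a (1-a) = a := max_eq_left (by linarith)
    rw [hmax]
    exact mass_bound hgt ha2 hδ0 hSn hS1

lemma Fdiff (μ : Measure ℝ) [IsProbabilityMeasure μ] {u v : ℝ} (hu : 0 ≤ u) (huv : u ≤ v) :
    (μ (Set.Icc 0 v)).toReal - (μ (Set.Icc 0 u)).toReal = (μ (Set.Ioc u v)).toReal := by
  have hsplit : Set.Icc (0:ℝ) u ∪ Set.Ioc u v = Set.Icc 0 v :=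
    Set.Icc_union_Ioc_eq_Icc hu huv
  have hdisj : Disjoint (Set.Icc (0:ℝ) u) (Set.Ioc u v) := by
    rw [Set.disjoint_left]
    rintro y ⟨_, hy2⟩ ⟨hy3, _⟩
    exact absurd hy2 (not_le.mpr hy3)
  have := measure_union (μ := μ) hdisj measurableSet_Ioc
  rw [hsplit] at this
  rw [this, ENNReal.toReal_add (measure_ne_top μ _) (measure_ne_top μ _)]
  ring

lemma volume_badSet_le (δ r₁ r₂ : ℝ) (hr₁0 : 0 < r₁) (hr₁ : r₁ ≤ 1) (hr₂ : 1 ≤ r₂) (n : ℕ) :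
    MeasureTheory.volume (⋃ k ∈ (Finset.range (2^n)).filter (fun k =>
        ((natOnes n k : ℝ) < ((1:ℝ)/2 - δ)*n ∨ ((1:ℝ)/2+δ)*(n:ℝ) < (natOnes n k : ℝ))),
      Set.Ico ((k:ℝ)/2^n) (((k:ℝ)+1)/2^n))
      ≤ ENNReal.ofReal ((((1+r₁) * r₁^(-((1/2:ℝ)-δ))/2)^n + ((1+r₂) * r₂^(-((1/2:ℝ)+δ))/2)^n)) := by
  classical
  have hr₂0 : 0 < r₂ := lt_of_lt_of_le one_pos hr₂
  set P := fun k => ((natOnes n k : ℝ) < ((1:ℝ)/2 - δ)*n ∨ ((1:ℝ)/2+δ)*(n:ℝ) < (natOnes n k : ℝ))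
  have hvol : ∀ k : ℕ, volume (Set.Ico ((k:ℝ)/2^n) (((k:ℝ)+1)/2^n)) = ENNReal.ofReal ((1:ℝ)/2^n) := by
    intro k
    rw [Real.volume_Ico]
    congr 1
    ring
  have hcard : ((((Finset.range (2^n)).filter P).card : ℝ))
      ≤ ((1+r₁) * r₁^(-((1/2:ℝ)-δ)))^n + ((1+r₂) * r₂^(-((1/2:ℝ)+δ)))^n := by
    have hsub : (Finset.range (2^n)).filter P ⊆
        ((Finset.range (2^n)).filter (fun k => (natOnes n k : ℝ) < ((1:ℝ)/2 - δ)*n)) ∪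
        ((Finset.range (2^n)).filter (fun k => ((1:ℝ)/2+δ)*(n:ℝ) < (natOnes n k : ℝ))) := by
      rw [← Finset.filter_or]
    have h1 := card_tail_lower n (((1:ℝ)/2 - δ)*n) r₁ hr₁0 hr₁
    have h2 := card_tail_upper n (((1:ℝ)/2 + δ)*n) r₂ hr₂
    rw [pow_chernoff_eq hr₁0 n] at h1
    rw [pow_chernoff_eq hr₂0 n] at h2
    calc ((((Finset.range (2^n)).filter P).card : ℝ))
        ≤ ((((Finset.range (2^n)).filter (fun k => (natOnes n k : ℝ) < ((1:ℝ)/2 - δ)*n)) ∪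
          ((Finset.range (2^n)).filter (fun k => ((1:ℝ)/2+δ)*(n:ℝ) < (natOnes n k : ℝ)))).card : ℝ) := by
          exact_mod_cast Finset.card_le_card hsub
      _ ≤ ((((Finset.range (2^n)).filter (fun k => (natOnes n k : ℝ) < ((1:ℝ)/2 - δ)*n)).card : ℝ))
          + ((((Finset.range (2^n)).filter (fun k => ((1:ℝ)/2+δ)*(n:ℝ) < (natOnes n k : ℝ))).card : ℝ)) := by
          exact_mod_cast Finset.card_union_le _ _
      _ ≤ ((1+r₁) * r₁^(-((1/2:ℝ)-δ)))^n + ((1+r₂) * r₂^(-((1/2:ℝ)+δ)))^n := by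
          exact add_le_add h1 h2
  calc volume (⋃ k ∈ (Finset.range (2^n)).filter P, Set.Ico ((k:ℝ)/2^n) (((k:ℝ)+1)/2^n))
      ≤ ∑ k ∈ (Finset.range (2^n)).filter P, volume (Set.Ico ((k:ℝ)/2^n) (((k:ℝ)+1)/2^n)) :=
        measure_biUnion_finset_le _ _
    _ = ∑ _k ∈ (Finset.range (2^n)).filter P, ENNReal.ofReal ((1:ℝ)/2^n) := by
        exact Finset.sum_congr rfl (fun k _ => hvol k)
    _ = (((Finset.range (2^n)).filter P).card : ℝ≥0∞) * ENNReal.ofReal ((1:ℝ)/2^n) := by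
        rw [Finset.sum_const, nsmul_eq_mul]
    _ = ENNReal.ofReal ((((Finset.range (2^n)).filter P).card : ℝ) * ((1:ℝ)/2^n)) := by
        rw [ENNReal.ofReal_mul (by positivity), ENNReal.ofReal_natCast]
    _ ≤ ENNReal.ofReal ((((1+r₁) * r₁^(-((1/2:ℝ)-δ))/2)^n + ((1+r₂) * r₂^(-((1/2:ℝ)+δ))/2)^n)) := by
        apply ENNReal.ofReal_le_ofReal
        have hp1 : (0:ℝ) < (1+r₁) * r₁^(-((1/2:ℝ)-δ)) := by positivity
        have hp2 : (0:ℝ) < (1+r₂) * r₂^(-((1/2:ℝ)+δ)) := by positivity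
        rw [div_pow, div_pow]
        calc (((Finset.range (2^n)).filter P).card : ℝ) * ((1:ℝ)/2^n)
            = (((Finset.range (2^n)).filter P).card : ℝ) / 2^n := by ring
          _ ≤ (((1+r₁) * r₁^(-((1/2:ℝ)-δ)))^n + ((1+r₂) * r₂^(-((1/2:ℝ)+δ)))^n) / 2^n := by
              gcongr
          _ = ((1+r₁) * r₁^(-((1/2:ℝ)-δ)))^n/2^n + ((1+r₂) * r₂^(-((1/2:ℝ)+δ)))^n/2^n := by
              ring
lemma two_rpow_mul_eq {ε : ℝ} (n : ℕ) :
    (2:ℝ)^(n:ℕ) * (2:ℝ) ^ (-(1+ε)*(n:ℝ)) = ((2:ℝ)^(-ε))^n := by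
  rw [← Real.rpow_natCast (2:ℝ) n, ← Real.rpow_add two_pos,
    ← Real.rpow_natCast ((2:ℝ)^(-ε)) n, ← Real.rpow_mul two_pos.le]
  congr 1
  ring

lemma tsum_grid_ne_top {ε : ℝ} (hε : 0 < ε) :
    ∑' n : ℕ, MeasureTheory.volume (⋃ k ∈ Finset.range (2^n+1),
      Metric.closedBall ((k:ℝ)/2^n) ((2:ℝ) ^ (-(1+ε)*(n:ℝ)))) ≠ ⊤ := by
  set ρ := (2:ℝ)^(-ε) with hρdef
  have hρ0 : 0 < ρ := Real.rpow_pos_of_pos two_pos _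
  have hρ1 : ρ < 1 := Real.rpow_lt_one_of_one_lt_of_neg one_lt_two (by linarith)
  have hbound : ∀ n : ℕ, MeasureTheory.volume (⋃ k ∈ Finset.range (2^n+1),
      Metric.closedBall ((k:ℝ)/2^n) ((2:ℝ) ^ (-(1+ε)*(n:ℝ)))) ≤ ENNReal.ofReal (4 * ρ^n) := by
    intro n
    have hη : (0:ℝ) ≤ (2:ℝ) ^ (-(1+ε)*(n:ℝ)) := (Real.rpow_pos_of_pos two_pos _).le
    calc MeasureTheory.volume (⋃ k ∈ Finset.range (2^n+1),
        Metric.closedBall ((k:ℝ)/2^n) ((2:ℝ) ^ (-(1+ε)*(n:ℝ))))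
        ≤ ∑ k ∈ Finset.range (2^n+1),
          MeasureTheory.volume (Metric.closedBall ((k:ℝ)/2^n) ((2:ℝ) ^ (-(1+ε)*(n:ℝ)))) :=
          measure_biUnion_finset_le _ _
      _ = ∑ _k ∈ Finset.range (2^n+1), ENNReal.ofReal (2 * (2:ℝ) ^ (-(1+ε)*(n:ℝ))) := by
          apply Finset.sum_congr rfl
          intro k _
          rw [Real.volume_closedBall]
      _ = ((2^n+1 : ℕ) : ℝ≥0∞) * ENNReal.ofReal (2 * (2:ℝ) ^ (-(1+ε)*(n:ℝ))) := by
          rw [Finset.sum_const, Finset.card_range, nsmul_eq_mul]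
      _ = ENNReal.ofReal (((2^n+1 : ℕ) : ℝ) * (2 * (2:ℝ) ^ (-(1+ε)*(n:ℝ)))) := by
          rw [ENNReal.ofReal_mul (by norm_num : (0:ℝ) ≤ 2), ← ENNReal.ofReal_natCast (2^n+1),
            ← ENNReal.ofReal_mul (by positivity), ← ENNReal.ofReal_mul (by positivity)]
      _ ≤ ENNReal.ofReal (4 * ρ^n) := by
          apply ENNReal.ofReal_le_ofReal
          have h1 : ((2^n+1 : ℕ) : ℝ) ≤ 2 * 2^n := by
            push_cast
            have : (1:ℝ) ≤ 2^n := one_le_pow₀ (by norm_num)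
            linarith
          have h2 : (2:ℝ)^(n:ℕ) * (2:ℝ) ^ (-(1+ε)*(n:ℝ)) = ρ^n := two_rpow_mul_eq n
          nlinarith [h2, hη, pow_pos (show (0:ℝ) < 2 by norm_num) n]
  apply ne_top_of_le_ne_top _ (ENNReal.tsum_le_tsum hbound)
  have hsumm : Summable (fun n : ℕ => 4 * ρ^n) :=
    (summable_geometric_of_lt_one hρ0.le hρ1).mul_left 4
  rw [← ENNReal.ofReal_tsum_of_nonneg (fun n => by positivity) hsumm]
  exact ENNReal.ofReal_ne_top

set_option maxHeartbeats 2000000 in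
theorem bernoulli_cdf_flat (a : ℝ) (ha : a ∈ Set.Ioo (0:ℝ) 1) (hane : a ≠ 1/2)
    (μ : MeasureTheory.Measure ℝ) [MeasureTheory.IsProbabilityMeasure μ]
    (hμd : ∀ n : ℕ, ∀ k : ℕ, k < 2^n →
      μ (Set.Ico ((k:ℝ)/2^n) (((k:ℝ)+1)/2^n)) =
        ENNReal.ofReal (a ^ (n - onesCount ((k:ℝ)/2^n) n) *
          (1-a) ^ onesCount ((k:ℝ)/2^n) n)) :
    ∃ c : ℝ, 1 < c ∧ ∀ᵐ x ∂(MeasureTheory.volume : MeasureTheory.Measure ℝ),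
      x ∈ Set.Ioo (0:ℝ) 1 →
      Filter.Tendsto
        (fun h : ℝ => ((μ (Set.Icc 0 (x+h))).toReal - (μ (Set.Icc 0 x)).toReal) / |h| ^ c)
        (nhdsWithin 0 {0}ᶜ) (nhds 0) ∧
      HasDerivAt (fun y => (μ (Set.Icc 0 y)).toReal) 0 x := by
  classical
  obtain ⟨ha1, ha2⟩ := ha
  -- the dominant digit probability
  set b := max a (1-a) with hbdef
  have hb1 : 1/2 < b := by
    rcases lt_or_gt_of_ne hane with h | h
    · exact lt_max_of_lt_right (by linarith)
    · exact lt_max_of_lt_left h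
  have hb2 : b < 1 := max_lt (by linarith) (by linarith)
  obtain ⟨δ, hδ0, hδhalf, hq⟩ := exists_delta hb1 hb2
  set q := b * ((1-b)/b) ^ ((1/2:ℝ) - δ) with hqdef
  have h1b : (0:ℝ) < 1 - b := by linarith
  have hbpos : (0:ℝ) < b := by linarith
  have hρpos : (0:ℝ) < (1-b)/b := by positivity
  have hqpos : 0 < q := mul_pos hbpos (Real.rpow_pos_of_pos hρpos _)
  -- exponents
  set γ := Real.logb 2 (1/q) with hγdef
  have h2q : (2:ℝ) < 1/q := by rw [lt_div_iff₀ hqpos]; linarith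
  have hγ1 : 1 < γ := by
    rw [hγdef]
    rw [Real.lt_logb_iff_rpow_lt one_lt_two (by positivity), Real.rpow_one]
    exact h2q
  have hq2γ : (2:ℝ)^(-γ) = q := by
    rw [Real.rpow_neg two_pos.le, hγdef,
      Real.rpow_logb two_pos (by norm_num) (by positivity), one_div, inv_inv]
  set ε := (γ-1)/2 with hεdef
  have hε0 : 0 < ε := by rw [hεdef]; linarith
  have hεp : (0:ℝ) < 1 + ε := by linarith
  set c' := γ/(1+ε) with hc'def
  have hεγ : (1+ε)*c' = γ := by rw [hc'def]; field_simp
  have hc'1 : 1 < c' := by rw [hc'def, lt_div_iff₀ hεp, hεdef]; linarith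
  have hc'0 : 0 < c' := by linarith
  refine ⟨(1+c')/2, by linarith, ?_⟩
  set c := (1+c')/2 with hcdef
  have hc1 : 1 < c := by rw [hcdef]; linarith
  have hcc' : c < c' := by rw [hcdef]; linarith
  -- bad sets
  set G : ℕ → Set ℝ := fun n => ⋃ k ∈ Finset.range (2^n+1),
    Metric.closedBall ((k:ℝ)/2^n) ((2:ℝ)^(-(1+ε)*(n:ℝ))) with hGdef
  set Bad : ℕ → Set ℝ := fun n => ⋃ k ∈ (Finset.range (2^n)).filter
      (fun k => ((natOnes n k : ℝ) < ((1:ℝ)/2 - δ)*n ∨ ((1:ℝ)/2+δ)*(n:ℝ) < (natOnes n k : ℝ))),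
    Set.Ico ((k:ℝ)/2^n) (((k:ℝ)+1)/2^n) with hBaddef
  have hGa : ∀ᵐ x ∂(volume : Measure ℝ), ∀ᶠ n in atTop, x ∉ G n :=
    MeasureTheory.ae_eventually_notMem (tsum_grid_ne_top hε0)
  -- chernoff constants
  have hθ₁0 : (0:ℝ) < 1/2 - δ := by linarith
  have hθ₁1 : (1:ℝ)/2 - δ < 1 := by linarith
  have hθ₂0 : (0:ℝ) < 1/2 + δ := by linarith
  have hθ₂1 : (1:ℝ)/2 + δ < 1 := by linarith
  set r₁ := ((1:ℝ)/2 - δ)/(1-((1:ℝ)/2 - δ)) with hr₁def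
  set r₂ := ((1:ℝ)/2 + δ)/(1-((1:ℝ)/2 + δ)) with hr₂def
  have hr₁0 : 0 < r₁ := by rw [hr₁def]; apply div_pos hθ₁0; linarith
  have hr₁1 : r₁ ≤ 1 := by rw [hr₁def, div_le_one (by linarith)]; linarith
  have hr₂1 : 1 ≤ r₂ := by rw [hr₂def, le_div_iff₀ (by linarith)]; linarith
  have hr₂0 : 0 < r₂ := lt_of_lt_of_le one_pos hr₂1
  have hw₁ : (1 + r₁) * r₁^(-((1/2:ℝ)-δ)) < 2 :=
    chernoff_const_lt_two hθ₁0 hθ₁1 (ne_of_lt (by linarith))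
  have hw₂ : (1 + r₂) * r₂^(-((1/2:ℝ)+δ)) < 2 :=
    chernoff_const_lt_two hθ₂0 hθ₂1 (ne_of_gt (by linarith))
  have hw₁0 : 0 < (1 + r₁) * r₁^(-((1/2:ℝ)-δ)) := by positivity
  have hw₂0 : 0 < (1 + r₂) * r₂^(-((1/2:ℝ)+δ)) := by positivity
  -- summability of the bad digit sets
  have hBsum : ∑' n : ℕ, volume (Bad n) ≠ ⊤ := by
    apply ne_top_of_le_ne_top _ (ENNReal.tsum_le_tsum (fun n =>
      volume_badSet_le δ r₁ r₂ hr₁0 hr₁1 hr₂1 n))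
    have hs1 : Summable (fun n : ℕ => ((1 + r₁) * r₁^(-((1/2:ℝ)-δ))/2)^n) := by
      apply summable_geometric_of_lt_one (by positivity)
      linarith
    have hs2 : Summable (fun n : ℕ => ((1 + r₂) * r₂^(-((1/2:ℝ)+δ))/2)^n) := by
      apply summable_geometric_of_lt_one (by positivity)
      linarith
    rw [← ENNReal.ofReal_tsum_of_nonneg (fun n => by positivity) (hs1.add hs2)]
    exact ENNReal.ofReal_ne_top
  have hBa : ∀ᵐ x ∂(volume : Measure ℝ), ∀ᶠ n in atTop, x ∉ Bad n :=
    MeasureTheory.ae_eventually_notMem hBsum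
  filter_upwards [hGa, hBa] with x hxG hxB hx
  obtain ⟨hx0, hx1⟩ := hx
  obtain ⟨N₁, hN₁⟩ := eventually_atTop.mp hxG
  obtain ⟨N₂, hN₂⟩ := eventually_atTop.mp hxB
  set N := max N₁ N₂ with hNdef
  -- the key local estimate
  have key : ∀ h : ℝ, |h| ≤ (2:ℝ)^(-(1+ε)*(N:ℝ)) →
      |(μ (Set.Icc 0 (x+h))).toReal - (μ (Set.Icc 0 x)).toReal| ≤ (2:ℝ)^γ * |h|^c' := by
    intro h hh
    rcases eq_or_ne h 0 with rfl | hne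
    · simp [Real.zero_rpow (by positivity : c' ≠ 0)]
    · have hhpos : 0 < |h| := abs_pos.mpr hne
      set L := Real.logb 2 |h| with hLdef
      have hhL : (2:ℝ)^L = |h| := Real.rpow_logb two_pos (by norm_num) hhpos
      -- choose the generation n
      have hLN : L ≤ -(1+ε)*(N:ℝ) := by
        rw [← hhL] at hh
        exact (Real.rpow_le_rpow_left_iff one_lt_two).mp hh
      set t := -L / (1+ε) with htdef
      have htN : (N:ℝ) ≤ t := by
        rw [htdef, le_div_iff₀ hεp]
        linarith [hLN]
      have ht0 : 0 ≤ t := le_trans (Nat.cast_nonneg N) htN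
      set n := ⌊t⌋₊ with hndef
      have hnN : N ≤ n := Nat.le_floor htN
      have hnt : (n:ℝ) ≤ t := Nat.floor_le ht0
      have htn1 : t < (n:ℝ)+1 := Nat.lt_floor_add_one t
      have hhn : |h| ≤ (2:ℝ)^(-(1+ε)*(n:ℝ)) := by
        rw [← hhL]
        apply Real.rpow_le_rpow_of_exponent_le one_lt_two.le
        rw [htdef, le_div_iff₀ hεp] at hnt
        linarith [hnt]
      have hhn1 : (2:ℝ)^(-(1+ε)*((n:ℝ)+1)) < |h| := by
        rw [← hhL]
        apply Real.rpow_lt_rpow_of_exponent_lt one_lt_two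
        rw [htdef, div_lt_iff₀ hεp] at htn1
        linarith [htn1]
      have hηpos : (0:ℝ) < (2:ℝ)^(-(1+ε)*(n:ℝ)) := Real.rpow_pos_of_pos two_pos _
      -- the dyadic interval containing x
      set k := (⌊x * 2^n⌋).toNat with hkdef
      have h2npos : (0:ℝ) < 2^n := by positivity
      have hfl0 : 0 ≤ ⌊x * 2^n⌋ := Int.floor_nonneg.mpr (by positivity)
      have hkc : ((k:ℕ):ℝ) = ((⌊x * 2^n⌋ : ℤ) : ℝ) := by
        rw [hkdef]
        exact_mod_cast congrArg (fun z : ℤ => (z : ℝ)) (Int.toNat_of_nonneg hfl0)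
      have hkx1 : ((k:ℝ))/2^n ≤ x := by
        rw [div_le_iff₀ h2npos, hkc]
        exact Int.floor_le (x * 2^n)
      have hkx2 : x < ((k:ℝ)+1)/2^n := by
        rw [lt_div_iff₀ h2npos, hkc]
        have := Int.lt_floor_add_one (x * 2^n)
        push_cast
        push_cast at this
        linarith
      have hk2n : k < 2^n := by
        have hx2n : x * 2^n < 2^n := by
          calc x * 2^n < 1 * 2^n := mul_lt_mul_of_pos_right hx1 h2npos
            _ = 2^n := one_mul _
        have h2 : ⌊x * 2^n⌋ < ((2^n : ℕ) : ℤ) := Int.floor_lt.mpr (by push_cast; exact hx2n)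
        have hkz : (k:ℤ) = ⌊x * 2^n⌋ := Int.toNat_of_nonneg hfl0
        exact_mod_cast hkz ▸ h2
      -- gaps to the dyadic grid
      have hxG' : x ∉ G n := hN₁ n (le_trans (le_max_left _ _) hnN)
      rw [hGdef] at hxG'
      simp only [Set.mem_iUnion, not_exists] at hxG'
      have hgap : ∀ k' : ℕ, k' < 2^n + 1 → (2:ℝ)^(-(1+ε)*(n:ℝ)) < |x - (k':ℝ)/2^n| := by
        intro k' hk'
        have := hxG' k'
        have h2 := this (Finset.mem_range.mpr hk')
        rw [Metric.mem_closedBall, Real.dist_eq, not_le] at h2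
        exact h2
      have hgap1 : (2:ℝ)^(-(1+ε)*(n:ℝ)) < x - (k:ℝ)/2^n := by
        have := hgap k (by omega)
        rwa [abs_of_nonneg (by linarith [hkx1])] at this
      have hgap2 : (2:ℝ)^(-(1+ε)*(n:ℝ)) < ((k:ℝ)+1)/2^n - x := by
        have := hgap (k+1) (by omega)
        rw [abs_sub_comm] at this
        have hcast : (((k+1:ℕ)):ℝ)/2^n = ((k:ℝ)+1)/2^n := by push_cast; ring
        rw [hcast] at this
        rwa [abs_of_nonneg (by linarith [hkx2])] at this
      -- the digit count of k is in the good range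
      have hxB' : x ∉ Bad n := hN₂ n (le_trans (le_max_right _ _) hnN)
      rw [hBaddef] at hxB'
      have hkgood : ¬ ((natOnes n k : ℝ) < ((1:ℝ)/2 - δ)*n ∨ ((1:ℝ)/2+δ)*(n:ℝ) < (natOnes n k : ℝ)) := by
        intro hbad
        apply hxB'
        apply Set.mem_biUnion (Finset.mem_coe.mpr (Finset.mem_filter.mpr
          ⟨Finset.mem_range.mpr hk2n, hbad⟩))
        exact ⟨hkx1, hkx2⟩
      push_neg at hkgood
      obtain ⟨hkg1, hkg2⟩ := hkgood
      -- mass of the interval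
      have hμIco := hμd n k hk2n
      have hS : onesCount ((k:ℝ)/2^n) n = natOnes n k :=
        onesCount_dyadic le_rfl (by
          rw [div_lt_div_iff₀ h2npos h2npos]
          have : (k:ℝ) < (k:ℝ)+1 := by linarith
          exact mul_lt_mul_of_pos_right this h2npos)
      rw [hS] at hμIco
      have hmass_le : a ^ (n - natOnes n k) * (1-a) ^ (natOnes n k) ≤ q^n :=
        mass_bound_final ha1 ha2 hane hδ0 (natOnes_le n k) hkg1 hkg2
      have hqn : q^n ≤ (2:ℝ)^γ * |h|^c' := by
        have e1 : q^n = (2:ℝ)^(-γ*(n:ℝ)) := by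
          rw [← hq2γ, ← Real.rpow_natCast ((2:ℝ)^(-γ)) n, ← Real.rpow_mul two_pos.le]
        have e2 : ((2:ℝ)^(-(1+ε)*((n:ℝ)+1)))^c' = (2:ℝ)^(-γ*((n:ℝ)+1)) := by
          rw [← Real.rpow_mul two_pos.le]
          congr 1
          linear_combination (-(n:ℝ)-1) * hεγ
        calc q^n = (2:ℝ)^(-γ*(n:ℝ)) := e1
          _ = (2:ℝ)^γ * (2:ℝ)^(-γ*((n:ℝ)+1)) := by
              rw [← Real.rpow_add two_pos]
              congr 1
              ring
          _ = (2:ℝ)^γ * ((2:ℝ)^(-(1+ε)*((n:ℝ)+1)))^c' := by rw [e2]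
          _ ≤ (2:ℝ)^γ * |h|^c' := by
              apply mul_le_mul_of_nonneg_left _ (Real.rpow_pos_of_pos two_pos _).le
              exact Real.rpow_le_rpow (Real.rpow_pos_of_pos two_pos _).le hhn1.le hc'0.le
      have habs : |h| ≤ (2:ℝ)^(-(1+ε)*(n:ℝ)) := hhn
      -- bound the measure difference
      have hIcoReal : (μ (Set.Ico ((k:ℝ)/2^n) (((k:ℝ)+1)/2^n))).toReal
          = a ^ (n - natOnes n k) * (1-a) ^ (natOnes n k) := by
        rw [hμIco, ENNReal.toReal_ofReal
          (mul_nonneg (pow_nonneg ha1.le _) (pow_nonneg (by linarith) _))]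
      rcases le_or_gt 0 h with hpos | hneg
      · rw [Fdiff μ hx0.le (by linarith)]
        rw [abs_of_nonneg ENNReal.toReal_nonneg]
        have hsub : Set.Ioc x (x+h) ⊆ Set.Ico ((k:ℝ)/2^n) (((k:ℝ)+1)/2^n) := by
          rintro y ⟨hy1, hy2⟩
          constructor
          · linarith [hkx1]
          · have : h ≤ |h| := le_abs_self h
            linarith [hgap2]
        calc (μ (Set.Ioc x (x+h))).toReal
            ≤ (μ (Set.Ico ((k:ℝ)/2^n) (((k:ℝ)+1)/2^n))).toReal :=
              ENNReal.toReal_mono (measure_ne_top μ _) (measure_mono hsub)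
          _ = a ^ (n - natOnes n k) * (1-a) ^ (natOnes n k) := hIcoReal
          _ ≤ q^n := hmass_le
          _ ≤ (2:ℝ)^γ * |h|^c' := hqn
      · have habsneg : |h| = -h := abs_of_neg hneg
        have hxh0 : 0 ≤ x + h := by
          have hk0 : (0:ℝ) ≤ (k:ℝ)/2^n := by positivity
          linarith [hgap1, habs]
        rw [abs_sub_comm, Fdiff μ hxh0 (by linarith), abs_of_nonneg ENNReal.toReal_nonneg]
        have hsub : Set.Ioc (x+h) x ⊆ Set.Ico ((k:ℝ)/2^n) (((k:ℝ)+1)/2^n) := by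
          rintro y ⟨hy1, hy2⟩
          constructor
          · linarith [hgap1, habs]
          · linarith [hkx2]
        calc (μ (Set.Ioc (x+h) x)).toReal
            ≤ (μ (Set.Ico ((k:ℝ)/2^n) (((k:ℝ)+1)/2^n))).toReal :=
              ENNReal.toReal_mono (measure_ne_top μ _) (measure_mono hsub)
          _ = a ^ (n - natOnes n k) * (1-a) ^ (natOnes n k) := hIcoReal
          _ ≤ q^n := hmass_le
          _ ≤ (2:ℝ)^γ * |h|^c' := hqn
  have hC : (0:ℝ) < (2:ℝ)^(-(1+ε)*(N:ℝ)) := Real.rpow_pos_of_pos two_pos _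
  constructor
  · -- the Hölder-type limit
    have hev : ∀ᶠ h in nhdsWithin (0:ℝ) {0}ᶜ,
        |h| ≤ (2:ℝ)^(-(1+ε)*(N:ℝ)) ∧ h ≠ 0 := by
      apply Filter.Eventually.and
      · apply eventually_nhdsWithin_of_eventually_nhds
        filter_upwards [eventually_abs_sub_lt (0:ℝ) hC] with h hh
        rw [sub_zero] at hh
        exact hh.le
      · filter_upwards [eventually_mem_nhdsWithin] with h hh
        simpa using hh
    apply squeeze_zero_norm' (a := fun h : ℝ => (2:ℝ)^γ * |h|^(c'-c))
    · filter_upwards [hev] with h hh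
      obtain ⟨hh1, hh2⟩ := hh
      have hhpos : 0 < |h| := abs_pos.mpr hh2
      have hkey := key h hh1
      rw [Real.norm_eq_abs, abs_div, abs_of_nonneg (Real.rpow_nonneg (abs_nonneg h) c),
        div_le_iff₀ (Real.rpow_pos_of_pos hhpos c)]
      have hsplit : |h|^(c'-c) * |h|^c = |h|^c' := by
        rw [← Real.rpow_add hhpos]
        congr 1
        ring
      calc |(μ (Set.Icc 0 (x+h))).toReal - (μ (Set.Icc 0 x)).toReal|
          ≤ (2:ℝ)^γ * |h|^c' := hkey
        _ = (2:ℝ)^γ * |h|^(c'-c) * |h|^c := by rw [mul_assoc, hsplit]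
    · have h1 : Tendsto (fun h : ℝ => |h|) (nhdsWithin (0:ℝ) {0}ᶜ) (nhds 0) := by
        have h0 := continuous_abs.tendsto (0:ℝ)
        rw [abs_zero] at h0
        exact h0.mono_left nhdsWithin_le_nhds
      have h2 : ContinuousAt (fun y : ℝ => y ^ (c'-c)) 0 :=
        Real.continuousAt_rpow_const 0 _ (Or.inr (by linarith))
      have h3 := (h2.tendsto).comp h1
      rw [Real.zero_rpow (ne_of_gt (by linarith [hcc']) : c'-c ≠ 0)] at h3
      have h4 := h3.const_mul ((2:ℝ)^γ)
      rw [mul_zero] at h4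
      exact h4
  · -- vanishing derivative
    rw [hasDerivAt_iff_tendsto_slope]
    have hev : ∀ᶠ y in nhdsWithin x {x}ᶜ,
        |y - x| ≤ (2:ℝ)^(-(1+ε)*(N:ℝ)) ∧ y ≠ x := by
      apply Filter.Eventually.and
      · apply eventually_nhdsWithin_of_eventually_nhds
        filter_upwards [eventually_abs_sub_lt x hC] with y hy
        exact hy.le
      · filter_upwards [eventually_mem_nhdsWithin] with y hy
        simpa using hy
    apply squeeze_zero_norm' (a := fun y : ℝ => (2:ℝ)^γ * |y - x|^(c'-1))
    · filter_upwards [hev] with y hy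
      obtain ⟨hy1, hy2⟩ := hy
      have hypos : 0 < |y - x| := abs_pos.mpr (sub_ne_zero.mpr hy2)
      have hkey := key (y - x) hy1
      rw [show x + (y - x) = y by ring] at hkey
      rw [slope_def_field, Real.norm_eq_abs, abs_div, div_le_iff₀ hypos]
      have hsplit : |y - x|^(c'-1) * |y - x| = |y - x|^c' := by
        nth_rewrite 2 [← Real.rpow_one |y - x|]
        rw [← Real.rpow_add hypos]
        congr 1
        ring
      calc |(μ (Set.Icc 0 y)).toReal - (μ (Set.Icc 0 x)).toReal|
          ≤ (2:ℝ)^γ * |y - x|^c' := hkey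
        _ = (2:ℝ)^γ * |y - x|^(c'-1) * |y - x| := by rw [mul_assoc, hsplit]
    · have h1 : Tendsto (fun y : ℝ => |y - x|) (nhdsWithin x {x}ᶜ) (nhds 0) := by
        have h0 : Continuous (fun y : ℝ => |y - x|) :=
          continuous_abs.comp (continuous_id.sub continuous_const)
        have := h0.tendsto x
        simp only [sub_self, abs_zero] at this
        exact this.mono_left nhdsWithin_le_nhds
      have h2 : ContinuousAt (fun z : ℝ => z ^ (c'-1)) 0 :=
        Real.continuousAt_rpow_const 0 _ (Or.inr (by linarith))
      have h3 := (h2.tendsto).comp h1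
      rw [Real.zero_rpow (ne_of_gt (by linarith) : c'-(1:ℝ) ≠ 0)] at h3
      have h4 := h3.const_mul ((2:ℝ)^γ)
      rw [mul_zero] at h4
      exact h4
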